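/- Let P be an S-Motzkin path and define a horizontal step h_i of P to be 'paired' if either it is the first horizontal step of P, or there exists a later horizontal step at the same height with all intermediate steps at or above that height. Then the factor of P beginning at a paired horizontal step h_i and ending just before its matching horizontal step (or at the end of P) is itself an S-Motzkin path when shifted to height 0. -/

import Mathlib

inductive Step : Type
  | u : Step
  | d : Step
  | h : Step
deriving DecidableEq, Repr

def stepVal : Step → ℤ
  | Step.u => 1
  | Step.d => -1
  | Step.h => 0

/-- Sum of step values (final height) of a word. -/
def hsum (w : List Step) : ℤ := (w.map stepVal).sum

/-- All prefixes have nonnegative height. -/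
def NonnegPrefixes (w : List Step) : Prop := ∀ p : List Step, p <+: w → 0 ≤ hsum p

/-- A Motzkin path: nonnegative prefix heights and total height 0. -/
def IsMotzkin (w : List Step) : Prop := NonnegPrefixes w ∧ hsum w = 0

/-- The word (hu)^n. -/
def huWord (n : ℕ) : List Step := (List.replicate n [Step.h, Step.u]).flatten

/-- An S-Motzkin path with n up, n down, n horizontal steps:
a Motzkin path whose subword of non-down steps is (hu)^n. -/
def IsSMotzkin (n : ℕ) (w : List Step) : Prop :=
  IsMotzkin w ∧ w.count Step.u = n ∧ w.count Step.d = n ∧ w.count Step.h = n ∧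
    w.filter (fun s => s ≠ Step.d) = huWord n

/-- A nonempty word over {h, u}. -/
def HUBlock (A : List Step) : Prop := A ≠ [] ∧ ∀ s ∈ A, s = Step.h ∨ s = Step.u

/-- Glue blocks A_i with runs of d_i down steps: A_0 d^{d_1} A_1 d^{d_2} ... -/
def joinAM (As : List (List Step)) (ds : List ℕ) : List Step :=
  (List.zipWith (fun A k => A ++ List.replicate k Step.d) As ds).flatten

/-- w decomposes as A_0 D_1 A_1 D_2 ... A_{t-1} D_t with A_i nonempty over {h,u}
and D_i nonempty runs of down steps. -/
def AMDecomp (w : List Step) (As : List (List Step)) (ds : List ℕ) : Prop :=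
  As.length = ds.length ∧ (∀ A ∈ As, HUBlock A) ∧ (∀ k ∈ ds, 0 < k) ∧ w = joinAM As ds

/-- An Asinowski–Mansour path with n up, n down, n horizontal steps. -/
def IsAM (n : ℕ) (w : List Step) : Prop :=
  IsMotzkin w ∧ w.count Step.u = n ∧ w.count Step.d = n ∧ w.count Step.h = n ∧
    ∃ As ds, AMDecomp w As ds

/-- A Dyck path with n up and n down steps, encoded over the alphabet Step. -/
def IsDyck (n : ℕ) (w : List Step) : Prop :=
  (∀ s ∈ w, s = Step.u ∨ s = Step.d) ∧ w.count Step.u = n ∧ w.count Step.d = n ∧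
    NonnegPrefixes w

/-- Height of the path at the start of step i. -/
def heightAt (w : List Step) (i : ℕ) : ℤ := hsum (w.take i)

/-- Two horizontal steps at positions i < j, at the same height, with all steps
strictly between them at or above that height. -/
def Matched (w : List Step) (i j : ℕ) : Prop :=
  i < j ∧ w[i]? = some Step.h ∧ w[j]? = some Step.h ∧
    heightAt w i = heightAt w j ∧ ∀ k, i < k → k < j → heightAt w i ≤ heightAt w k

/-- Positions of the horizontal steps of w, from left to right. -/
def hPositions (w : List Step) : List ℕ := List.findIdxs (fun s => s = Step.h) w

/-- Lexicographic (weak) order on lists of naturals. -/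
def LexLe (l l' : List ℕ) : Prop := l = l' ∨ List.Lex (· < ·) l l'

/-- w is an S-Motzkin word obtained by inserting horizontal steps into D. -/
def ValidIns (D w : List Step) : Prop :=
  (∃ m, IsSMotzkin m w) ∧ w.filter (fun s => s ≠ Step.h) = D

/-- w is the greedy h-insertion into D: each h leftmost, i.e. the list of positions
of the h's is lexicographically minimal among all valid insertions. -/
def GreedyFor (D w : List Step) : Prop :=
  ValidIns D w ∧ ∀ w', ValidIns D w' → LexLe (hPositions w) (hPositions w')

lemma hsum_append (a b : List Step) : hsum (a ++ b) = hsum a + hsum b := by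
  simp [hsum]

lemma huWord_succ (n : ℕ) : huWord (n+1) = Step.h :: Step.u :: huWord n := by
  simp [huWord, List.replicate_succ]

lemma huWord_add (a b : ℕ) : huWord (a + b) = huWord a ++ huWord b := by
  induction a with
  | zero => simp [huWord]
  | succ a ih => rw [Nat.succ_add, huWord_succ, huWord_succ, ih]; rfl

lemma length_huWord (n : ℕ) : (huWord n).length = 2*n := by
  induction n with
  | zero => rfl
  | succ n ih => rw [huWord_succ]; simp [ih]; omega

lemma count_u_huWord (n : ℕ) : (huWord n).count Step.u = n := by
  induction n with
  | zero => rfl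
  | succ n ih => rw [huWord_succ]; simp [List.count_cons, ih]

lemma count_h_huWord (n : ℕ) : (huWord n).count Step.h = n := by
  induction n with
  | zero => rfl
  | succ n ih => rw [huWord_succ]; simp [List.count_cons, ih]

lemma huWord_prefix_of_h (n : ℕ) : ∀ F rest : List Step,
    F ++ Step.h :: rest = huWord n → ∃ a, F = huWord a := by
  induction n with
  | zero => intro F rest hF; simp [huWord] at hF
  | succ n ih =>
    intro F rest hF
    rw [huWord_succ] at hF
    match F with
    | [] => exact ⟨0, rfl⟩
    | [x] => simp at hF
    | x :: y :: F' =>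
      simp only [List.cons_append, List.cons.injEq] at hF
      obtain ⟨a, ha⟩ := ih F' rest hF.2.2
      exact ⟨a+1, by rw [hF.1, hF.2.1, ha, huWord_succ]⟩

lemma hsum_count (w : List Step) :
    hsum w = (w.count Step.u : ℤ) - (w.count Step.d : ℤ) := by
  induction w with
  | nil => simp [hsum]
  | cons s t ih =>
    cases s <;> simp [hsum, List.count_cons, stepVal] at * <;> omega

/-- if h_i is a paired horizontal step of an S-Motzkin path P with
matching horizontal step h_j (same height, intermediate steps at or above), then the
factor of P from position i up to (but excluding) position j, shifted to height 0,
is itself an S-Motzkin path. -/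
theorem paired_factor_smotzkin (n : ℕ) (P : List Step) (i j : ℕ)
    (hP : IsSMotzkin n P) (hm : Matched P i j) :
    ∃ m, IsSMotzkin m ((P.drop i).take (j - i)) := by
  obtain ⟨⟨hnn, hz⟩, hcu, hcd, hch, hfil⟩ := hP
  obtain ⟨hij, hPi, hPj, hh, hbet⟩ := hm
  have hjlen : j < P.length := by
    by_contra hc
    rw [List.getElem?_eq_none (by omega)] at hPj
    simp at hPj
  have hilen : i < P.length := by omega
  have hPi' : P[i] = Step.h := by
    rw [List.getElem?_eq_getElem hilen] at hPi; exact Option.some.inj hPi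
  have hPj' : P[j] = Step.h := by
    rw [List.getElem?_eq_getElem hjlen] at hPj; exact Option.some.inj hPj
  set Q := (P.drop i).take (j - i) with hQdef
  have htakej : P.take j = P.take i ++ Q := by
    have := List.take_add (l := P) (i := i) (j := j - i)
    rwa [show i + (j - i) = j by omega] at this
  -- total height of Q is 0
  have hsumQ : hsum Q = 0 := by
    have hh' : hsum (P.take i) = hsum (P.take j) := hh
    rw [htakej, hsum_append] at hh'
    omega
  -- nonneg prefixes
  have hnnQ : NonnegPrefixes Q := by
    intro p hp
    have hp' : p = Q.take p.length := List.prefix_iff_eq_take.mp hp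
    set k' := min p.length (j - i) with hk'
    have hQt : Q.take p.length = (P.drop i).take k' := by
      rw [hQdef, List.take_take, hk', Nat.min_comm]
    have h2 : P.take (i + k') = P.take i ++ Q.take p.length := by
      rw [List.take_add, hQt]
    have hle : hsum (P.take i) ≤ hsum (P.take (i + k')) := by
      rcases Nat.eq_zero_or_pos k' with h0 | h0
      · rw [h0]; simp
      · rcases eq_or_lt_of_le (show i + k' ≤ j by omega) with he | hlt
        · rw [he]; exact le_of_eq hh
        · exact hbet (i + k') (by omega) hlt
    rw [h2, hsum_append] at hle
    rw [hp']
    omega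
  -- decomposition of P
  have hPsplit : P = P.take i ++ Q ++ P.drop j := by
    rw [← htakej, List.take_append_drop]
  have hdropi : P.drop i = Step.h :: P.drop (i + 1) := by
    rw [List.drop_eq_getElem_cons hilen, hPi']
  have hdropj : P.drop j = Step.h :: P.drop (j + 1) := by
    rw [List.drop_eq_getElem_cons hjlen, hPj']
  have hQcons : Q = Step.h :: (P.drop (i + 1)).take (j - (i + 1)) := by
    rw [hQdef, hdropi, show j - i = (j - (i + 1)) + 1 by omega, List.take_succ_cons]
  -- filters
  set f : Step → Bool := fun s => decide (s ≠ Step.d) with hf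
  have hfh : f Step.h = true := by simp [hf]
  have hfilP : P.filter f = huWord n := hfil
  rw [hPsplit, List.filter_append, List.filter_append] at hfilP
  rw [hdropj, List.filter_cons_of_pos hfh] at hfilP
  set R2 := (P.drop (j + 1)).filter f with hR2
  set FQ := Q.filter f with hFQ
  set F1 := (P.take i).filter f with hF1
  have hbig : (F1 ++ FQ) ++ Step.h :: R2 = huWord n := by
    exact hfilP
  obtain ⟨b, hb⟩ := huWord_prefix_of_h n (F1 ++ FQ) R2 hbig
  have hFQcons : FQ = Step.h :: ((P.drop (i + 1)).take (j - (i + 1))).filter f := by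
    rw [hFQ, hQcons, List.filter_cons_of_pos hfh]
  obtain ⟨a, ha⟩ := huWord_prefix_of_h n F1
      (((P.drop (i + 1)).take (j - (i + 1))).filter f ++ Step.h :: R2) (by
        rw [← hbig, hFQcons]; simp)
  -- FQ = huWord (b - a)
  have hab : a ≤ b := by
    have := congrArg List.length hb
    rw [List.length_append, length_huWord, ha, length_huWord] at this
    omega
  have hFQhu : FQ = huWord (b - a) := by
    have : huWord a ++ FQ = huWord a ++ huWord (b - a) := by
      rw [← huWord_add, show a + (b - a) = b by omega, ← hb, ha]
    exact List.append_cancel_left this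
  set m := b - a with hm'
  refine ⟨m, ⟨hnnQ, hsumQ⟩, ?_, ?_, ?_, ?_⟩
  · rw [← List.count_filter (p := f) (by simp [hf]), ← hFQ, hFQhu, count_u_huWord]
  · have := hsum_count Q
    rw [hsumQ] at this
    have hu : Q.count Step.u = m := by
      rw [← List.count_filter (p := f) (by simp [hf]), ← hFQ, hFQhu, count_u_huWord]
    omega
  · rw [← List.count_filter (p := f) (by simp [hf]), ← hFQ, hFQhu, count_h_huWord]
  · show Q.filter f = huWord m
    rw [← hFQ]; exact hFQhu
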